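/- Let f : S → E be a strictly increasing function from a set of epsilon numbers into the epsilon numbers, and let y be an ordinal with Ep(y) ⊆ S. Then y is additively principal if and only if y[f] is additively principal. -/

import Mathlib

open Ordinal

/-- An ordinal is an epsilon number if it is a fixed point of `ω ^ ·`. -/
def IsEpsilon (x : Ordinal.{0}) : Prop := ω ^ x = x

theorem cnf_fst_lt {x : Ordinal.{0}} (h : ¬ ω ^ x = x) {p : Ordinal × Ordinal}
    (hp : p ∈ CNF ω x) : p.1 < x := by
  have hx : x ≠ 0 := by
    rintro rfl
    simp [Ordinal.CNF.zero_right] at hp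
  have h1 : p.1 ≤ Ordinal.log ω x := Ordinal.CNF.fst_le_log hp
  have h2 : Ordinal.log ω x < x := by
    rcases lt_or_eq_of_le (Ordinal.log_le_self ω x) with h' | h'
    · exact h'
    · exfalso
      have hle := Ordinal.opow_log_le_self ω hx
      rw [h'] at hle
      exact h (le_antisymm hle (Ordinal.right_le_opow x one_lt_omega0))
  exact lt_of_le_of_lt h1 h2

open scoped Classical in
/-- The set of epsilon numbers occurring hereditarily in the Cantor normal form of `x`. -/
noncomputable def Ep (x : Ordinal.{0}) : Set Ordinal.{0} :=
  if h : ω ^ x = x then {x}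
  else ⋃ p : {q // q ∈ CNF ω x}, Ep p.1.1
termination_by x
decreasing_by exact cnf_fst_lt h p.2

open scoped Classical in
/-- Simultaneous substitution of the epsilon numbers occurring hereditarily in the
Cantor normal form of `x` by their values under `f`. -/
noncomputable def subst (f : Ordinal.{0} → Ordinal.{0}) (x : Ordinal.{0}) : Ordinal.{0} :=
  if h : ω ^ x = x then f x
  else (((CNF ω x).attach).map (fun p => ω ^ subst f p.1.1 * p.1.2)).sum
termination_by x
decreasing_by exact cnf_fst_lt h p.2



-- basic tests
example (f : Ordinal → Ordinal) : subst f 0 = 0 := by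
  rw [subst, dif_neg (by norm_num), CNF.zero_right]
  rfl

example {x : Ordinal.{0}} (h : ω ^ x = x) : x ≠ 0 := by
  intro h0; rw [h0] at h; simp at h

theorem CNF_of_epsilon {x : Ordinal.{0}} (h : ω ^ x = x) : CNF ω x = [(x, 1)] := by
  have hx : x ≠ 0 := by intro h0; rw [h0] at h; simp at h
  have hlog : log ω x = x := by
    conv_lhs => rw [← h]
    exact log_opow one_lt_omega0 x
  rw [CNF.ne_zero hx, hlog, h, Ordinal.div_self hx, Ordinal.mod_self, CNF.zero_right]

theorem Ep_epsilon {x : Ordinal.{0}} (h : ω ^ x = x) : Ep x = {x} := by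
  rw [Ep, dif_pos h]

theorem subst_epsilon {f : Ordinal → Ordinal} {x : Ordinal.{0}} (h : ω ^ x = x) :
    subst f x = f x := by rw [subst, dif_pos h]

theorem Ep_CNF_subset {x : Ordinal.{0}} (h : ¬ ω ^ x = x) {p : Ordinal × Ordinal}
    (hp : p ∈ CNF ω x) : Ep p.1 ⊆ Ep x := by
  conv_rhs => rw [Ep]
  rw [dif_neg h]
  exact Set.subset_iUnion (fun q : {q // q ∈ CNF ω x} => Ep q.1.1) ⟨p, hp⟩

theorem eps_ne_zero {x : Ordinal.{0}} (h : ω ^ x = x) : x ≠ 0 := by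
  intro h0; rw [h0] at h; simp at h

theorem omega_le_eps {x : Ordinal.{0}} (h : ω ^ x = x) : ω ≤ x := by
  conv_rhs => rw [← h]
  calc ω = ω ^ (1 : Ordinal) := (opow_one ω).symm
    _ ≤ ω ^ x := opow_le_opow_right omega0_pos (Ordinal.one_le_iff_ne_zero.2 (eps_ne_zero h))

theorem log_lt_self {x : Ordinal.{0}} (h : ¬ ω ^ x = x) (hx : x ≠ 0) : log ω x < x := by
  rcases lt_or_eq_of_le (Ordinal.log_le_self ω x) with h' | h'
  · exact h'
  · exfalso
    have hle := Ordinal.opow_log_le_self ω hx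
    rw [h'] at hle
    exact h (le_antisymm hle (Ordinal.right_le_opow x one_lt_omega0))

theorem Ep_subset_of_CNF_subset {r x : Ordinal.{0}} (hx : ¬ ω ^ x = x)
    (h : ∀ q ∈ CNF ω r, q ∈ CNF ω x) : Ep r ⊆ Ep x := by
  by_cases hr : ω ^ r = r
  · have : (r, 1) ∈ CNF ω x := h _ (by rw [CNF_of_epsilon hr]; exact List.mem_singleton_self _)
    exact Ep_CNF_subset hx this
  · conv_lhs => rw [Ep]
    rw [dif_neg hr]
    exact Set.iUnion_subset fun q => Ep_CNF_subset hx (h _ q.2)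

theorem Ep_log_subset {x : Ordinal.{0}} (hx : x ≠ 0) : Ep (log ω x) ⊆ Ep x := by
  by_cases h : ω ^ x = x
  · have hlog : log ω x = x := by
      conv_lhs => rw [← h]; exact log_opow one_lt_omega0 x
    rw [hlog]
  · exact Ep_CNF_subset h (by rw [CNF.ne_zero hx]; exact List.mem_cons_self)

theorem Ep_mod_subset {x : Ordinal.{0}} (hx : x ≠ 0) : Ep (x % ω ^ log ω x) ⊆ Ep x := by
  by_cases h : ω ^ x = x
  · have hlog : log ω x = x := by
      conv_lhs => rw [← h]; exact log_opow one_lt_omega0 x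
    rw [hlog, h, Ordinal.mod_self]
    conv_lhs => rw [Ep]
    rw [dif_neg (by norm_num), CNF.zero_right]
    simp
  · exact Ep_subset_of_CNF_subset h (by
      intro q hq
      rw [CNF.ne_zero hx]
      exact List.mem_cons_of_mem _ hq)

section
variable {S : Set Ordinal.{0}} {f : Ordinal → Ordinal}
variable (hfE : ∀ e ∈ S, IsEpsilon (f e))

theorem subst_zero : subst f 0 = 0 := by
  rw [subst, dif_neg (by norm_num), CNF.zero_right]
  rfl

include hfE in
theorem subst_eq_sum {x : Ordinal.{0}} (hx : Ep x ⊆ S) :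
    subst f x = ((CNF ω x).map (fun p => ω ^ subst f p.1 * p.2)).sum := by
  by_cases h : ω ^ x = x
  · have hxS : x ∈ S := hx (by rw [Ep_epsilon h]; rfl)
    rw [subst_epsilon h, CNF_of_epsilon h]
    simp only [List.map_cons, List.map_nil, List.sum_cons, List.sum_nil, add_zero, mul_one]
    rw [subst_epsilon h]
    exact (hfE x hxS).symm
  · rw [subst, dif_neg h]
    exact congrArg List.sum (List.attach_map_val (f := fun q : Ordinal × Ordinal => ω ^ subst f q.1 * q.2))

include hfE in
theorem subst_decomp {x : Ordinal.{0}} (hx0 : x ≠ 0) (hx : Ep x ⊆ S) :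
    subst f x = ω ^ subst f (log ω x) * (x / ω ^ log ω x) + subst f (x % ω ^ log ω x) := by
  rw [subst_eq_sum hfE hx, CNF.ne_zero hx0, List.map_cons, List.sum_cons,
    ← subst_eq_sum hfE ((Ep_mod_subset hx0).trans hx)]

include hfE in
theorem subst_pos {x : Ordinal.{0}} (hx0 : x ≠ 0) (hx : Ep x ⊆ S) : 0 < subst f x := by
  rw [subst_decomp hfE hx0 hx]
  have h1 : (0:Ordinal) < ω ^ subst f (log ω x) * (x / ω ^ log ω x) := by
    apply mul_pos (opow_pos _ omega0_pos)
    exact Ordinal.div_pos (opow_ne_zero _ omega0_ne_zero) |>.2 (opow_log_le_self ω hx0)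
  exact h1.trans_le (le_self_add)

end

section
variable {S : Set Ordinal.{0}} {f : Ordinal → Ordinal}
variable (hS : ∀ e ∈ S, IsEpsilon e) (hfE : ∀ e ∈ S, IsEpsilon (f e)) (hf : StrictMonoOn f S)

include hfE hf in
theorem subst_lt_f : ∀ x : Ordinal.{0}, Ep x ⊆ S → ∀ e ∈ S, x < e → subst f x < f e := by
  intro x
  induction x using Ordinal.induction with
  | h x IH =>
    intro hEx e he hxe
    have hfe : ω ^ f e = f e := hfE e he
    have hp : Ordinal.Principal (· + ·) (f e) := hfe ▸ principal_add_omega0_opow (f e)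
    have h1e : (1:Ordinal) < f e := one_lt_omega0.trans_le (omega_le_eps hfe)
    by_cases hx0 : x = 0
    · rw [hx0, subst_zero]
      exact zero_lt_one.trans h1e
    by_cases h : ω ^ x = x
    · rw [subst_epsilon h]
      exact hf (hEx (by rw [Ep_epsilon h]; rfl)) he hxe
    · have hlog : log ω x < x := log_lt_self h hx0
      have hrem : x % ω ^ log ω x < x := mod_opow_log_lt_self ω hx0
      have hA : subst f (log ω x) < f e :=
        IH _ hlog ((Ep_log_subset hx0).trans hEx) e he (hlog.trans hxe)
      have hR : subst f (x % ω ^ log ω x) < f e :=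
        IH _ hrem ((Ep_mod_subset hx0).trans hEx) e he (hrem.trans hxe)
      have hterm : ω ^ subst f (log ω x) * (x / ω ^ log ω x) < f e := by
        calc ω ^ subst f (log ω x) * (x / ω ^ log ω x)
            < ω ^ subst f (log ω x) * ω :=
              (mul_lt_mul_iff_right₀ (opow_pos _ omega0_pos)).2
                (div_opow_log_lt x one_lt_omega0)
          _ = ω ^ (subst f (log ω x) + 1) := by rw [opow_add, opow_one]
          _ ≤ ω ^ f e := opow_le_opow_right omega0_pos (hp hA h1e).le
          _ = f e := hfe
      rw [subst_decomp hfE hx0 hEx]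
      exact hp hterm hR

end

section
variable {S : Set Ordinal.{0}} {f : Ordinal → Ordinal}
variable (hS : ∀ e ∈ S, IsEpsilon e) (hfE : ∀ e ∈ S, IsEpsilon (f e)) (hf : StrictMonoOn f S)

include hS hfE hf in
theorem subst_key : ∀ x' : Ordinal.{0},
    (Ep x' ⊆ S → x' ≠ 0 → subst f x' < ω ^ (subst f (log ω x') + 1)) ∧
    (∀ x < x', Ep x ⊆ S → Ep x' ⊆ S → subst f x < subst f x') := by
  intro x'
  induction x' using Ordinal.induction with
  | h x' IH =>
    have hLT : ∀ r a : Ordinal, r < x' → a < x' → Ep r ⊆ S → Ep a ⊆ S → r < ω ^ a →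
        subst f r < ω ^ subst f a := by
      intro r a hr ha hEr hEa hra
      by_cases hr0 : r = 0
      · rw [hr0, subst_zero]
        exact opow_pos _ omega0_pos
      · have h2 : log ω r < a :=
          (opow_lt_opow_iff_right one_lt_omega0).1 ((opow_log_le_self ω hr0).trans_lt hra)
        have h3 : subst f (log ω r) < subst f a :=
          (IH a ha).2 (log ω r) h2 ((Ep_log_subset hr0).trans hEr) hEa
        have h4 : subst f r < ω ^ (subst f (log ω r) + 1) := (IH r hr).1 hEr hr0
        exact h4.trans_le (opow_le_opow_right omega0_pos (Order.add_one_le_of_lt h3))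
    constructor
    · -- bound part
      intro hE hx0
      by_cases h : ω ^ x' = x'
      · have hlog : log ω x' = x' := by
          conv_lhs => rw [← h]
          exact log_opow one_lt_omega0 x'
        rw [subst_epsilon h, hlog, subst_epsilon h]
        calc f x' = ω ^ f x' := (hfE x' (hE (by rw [Ep_epsilon h]; rfl))).symm
          _ < ω ^ (f x' + 1) := (opow_lt_opow_iff_right one_lt_omega0).2 (lt_add_one _)
      · have ha' : log ω x' < x' := log_lt_self h hx0
        have hrem : subst f (x' % ω ^ log ω x') < ω ^ subst f (log ω x') :=
          hLT _ _ (mod_opow_log_lt_self ω hx0) ha' ((Ep_mod_subset hx0).trans hE)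
            ((Ep_log_subset hx0).trans hE) (mod_lt _ (opow_ne_zero _ omega0_ne_zero))
        rw [subst_decomp hfE hx0 hE]
        calc ω ^ subst f (log ω x') * (x' / ω ^ log ω x') + subst f (x' % ω ^ log ω x')
            < ω ^ subst f (log ω x') * (x' / ω ^ log ω x') + ω ^ subst f (log ω x') :=
              add_lt_add_right hrem _
          _ = ω ^ subst f (log ω x') * (x' / ω ^ log ω x' + 1) := by rw [mul_add, mul_one]
          _ ≤ ω ^ subst f (log ω x') * ω :=
              mul_le_mul_right (Order.add_one_le_of_lt (div_opow_log_lt x' one_lt_omega0)) _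
          _ = ω ^ (subst f (log ω x') + 1) := by rw [opow_add, opow_one]
    · -- monotonicity part
      intro x hxx' hEx hEx'
      by_cases h' : ω ^ x' = x'
      · rw [subst_epsilon h']
        exact subst_lt_f hfE hf x hEx x' (hEx' (by rw [Ep_epsilon h']; rfl)) hxx'
      · have hx'0 : x' ≠ 0 := fun h0 => by
          rw [h0] at hxx'; exact (not_lt_zero) hxx'
        have ha' : log ω x' < x' := log_lt_self h' hx'0
        have hEa' : Ep (log ω x') ⊆ S := (Ep_log_subset hx'0).trans hEx'
        have hEr' : Ep (x' % ω ^ log ω x') ⊆ S := (Ep_mod_subset hx'0).trans hEx'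
        have hdec' := subst_decomp hfE hx'0 hEx'
        have hc'1 : (1:Ordinal) ≤ x' / ω ^ log ω x' :=
          Order.one_le_iff_pos.2 ((Ordinal.div_pos (opow_ne_zero _ omega0_ne_zero)).2
            (opow_log_le_self ω hx'0))
        by_cases hx0 : x = 0
        · rw [hx0, subst_zero]
          exact subst_pos hfE hx'0 hEx'
        · have hdec := subst_decomp hfE hx0 hEx
          have haa' : log ω x ≤ log ω x' := log_mono_right ω hxx'.le
          have hEa : Ep (log ω x) ⊆ S := (Ep_log_subset hx0).trans hEx
          have hEr : Ep (x % ω ^ log ω x) ⊆ S := (Ep_mod_subset hx0).trans hEx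
          rcases lt_or_eq_of_le haa' with hlt | heq
          · have hA : subst f (log ω x) < subst f (log ω x') :=
              (IH _ ha').2 _ hlt hEa hEa'
            have hQx : subst f x < ω ^ (subst f (log ω x) + 1) := (IH x hxx').1 hEx hx0
            calc subst f x < ω ^ (subst f (log ω x) + 1) := hQx
              _ ≤ ω ^ subst f (log ω x') :=
                  opow_le_opow_right omega0_pos (Order.add_one_le_of_lt hA)
              _ ≤ ω ^ subst f (log ω x') * (x' / ω ^ log ω x') :=
                  le_mul_of_one_le_right' hc'1
              _ ≤ subst f x' := hdec' ▸ le_self_add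
          · have hcc' : x / ω ^ log ω x ≤ x' / ω ^ log ω x' := by
              rw [heq]
              have hd0 : (ω : Ordinal) ^ log ω x' ≠ 0 := opow_ne_zero _ omega0_ne_zero
              have hx'lt : x' < ω ^ log ω x' * Order.succ (x' / ω ^ log ω x') :=
                (Ordinal.div_le hd0).1 le_rfl
              exact (Ordinal.div_le hd0).2 (hxx'.le.trans_lt hx'lt)
            rcases lt_or_eq_of_le hcc' with hc | hc
            · have hrA : subst f (x % ω ^ log ω x) < ω ^ subst f (log ω x) :=
                hLT _ _ ((mod_opow_log_lt_self ω hx0).trans hxx') (heq ▸ ha') hEr hEa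
                  (mod_lt _ (opow_ne_zero _ omega0_ne_zero))
              calc subst f x
                  = ω ^ subst f (log ω x) * (x / ω ^ log ω x) + subst f (x % ω ^ log ω x) :=
                    hdec
                _ < ω ^ subst f (log ω x) * (x / ω ^ log ω x) + ω ^ subst f (log ω x) :=
                    add_lt_add_right hrA _
                _ = ω ^ subst f (log ω x) * (x / ω ^ log ω x + 1) := by rw [mul_add, mul_one]
                _ ≤ ω ^ subst f (log ω x) * (x' / ω ^ log ω x') :=
                    mul_le_mul_right (Order.add_one_le_of_lt hc) _
                _ = ω ^ subst f (log ω x') * (x' / ω ^ log ω x') := by rw [heq]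
                _ ≤ subst f x' := hdec' ▸ le_self_add
            · have e1 : ω ^ log ω x * (x / ω ^ log ω x) + x % ω ^ log ω x = x :=
                Ordinal.div_add_mod x _
              have hc2 : x / ω ^ log ω x = x' / ω ^ log ω x := by rw [hc, heq]
              have e2' : ω ^ log ω x * (x' / ω ^ log ω x) + x' % ω ^ log ω x = x' := by
                rw [heq]; exact Ordinal.div_add_mod x' _
              have hrr' : x % ω ^ log ω x < x' % ω ^ log ω x := by
                have h3 := hxx'
                rw [← e1, ← e2', ← hc2] at h3
                exact lt_of_add_lt_add_left h3
              have hr'lt : x' % ω ^ log ω x < x' := by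
                rw [heq]; exact mod_opow_log_lt_self ω hx'0
              have hEr'' : Ep (x' % ω ^ log ω x) ⊆ S := by rw [heq]; exact hEr'
              have hsub : subst f (x % ω ^ log ω x) < subst f (x' % ω ^ log ω x) :=
                (IH _ hr'lt).2 _ hrr' hEr hEr''
              rw [hdec, hdec', ← heq, ← hc2]
              exact add_lt_add_right hsub _
end

section
variable {S : Set Ordinal.{0}} {f : Ordinal → Ordinal}
variable (hS : ∀ e ∈ S, IsEpsilon e) (hfE : ∀ e ∈ S, IsEpsilon (f e)) (hf : StrictMonoOn f S)

include hS hfE hf in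
theorem subst_lt_opow {r a : Ordinal.{0}} (hEr : Ep r ⊆ S) (hEa : Ep a ⊆ S)
    (hra : r < ω ^ a) : subst f r < ω ^ subst f a := by
  by_cases hr0 : r = 0
  · rw [hr0, subst_zero]
    exact opow_pos _ omega0_pos
  · have h2 : log ω r < a :=
      (opow_lt_opow_iff_right one_lt_omega0).1 ((opow_log_le_self ω hr0).trans_lt hra)
    have h3 : subst f (log ω r) < subst f a :=
      (subst_key hS hfE hf a).2 (log ω r) h2 ((Ep_log_subset hr0).trans hEr) hEa
    have h4 : subst f r < ω ^ (subst f (log ω r) + 1) := (subst_key hS hfE hf r).1 hEr hr0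
    exact h4.trans_le (opow_le_opow_right omega0_pos (Order.add_one_le_of_lt h3))

end

theorem stmt1 (S : Set Ordinal.{0}) (f : Ordinal → Ordinal)
    (hS : ∀ e ∈ S, IsEpsilon e) (hfE : ∀ e ∈ S, IsEpsilon (f e))
    (hf : StrictMonoOn f S)
    (y : Ordinal) (hy : Ep y ⊆ S) :
    (0 < y ∧ Ordinal.Principal (· + ·) y) ↔
      (0 < subst f y ∧ Ordinal.Principal (· + ·) (subst f y)) := by
  constructor
  · rintro ⟨hy0, hyp⟩
    rcases principal_add_iff_zero_or_omega0_opow.1 hyp with rfl | ⟨a, rfl⟩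
    · exact absurd hy0 (lt_irrefl 0)
    · have hne : (ω : Ordinal) ^ a ≠ 0 := opow_ne_zero _ omega0_ne_zero
      have hdec := subst_decomp hfE hne hy
      rw [log_opow one_lt_omega0 a, Ordinal.div_self hne, Ordinal.mod_self, mul_one,
        subst_zero, add_zero] at hdec
      rw [hdec]
      exact ⟨opow_pos _ omega0_pos, principal_add_omega0_opow _⟩
  · rintro ⟨hz0, hzp⟩
    have hy0 : y ≠ 0 := by
      rintro rfl
      rw [subst_zero] at hz0
      exact lt_irrefl 0 hz0
    rcases principal_add_iff_zero_or_omega0_opow.1 hzp with h0 | ⟨ξ, hξ⟩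
    · rw [h0] at hz0
      exact absurd hz0 (lt_irrefl 0)
    have hξ' : subst f y = ω ^ ξ := hξ.symm
    have hEa : Ep (log ω y) ⊆ S := (Ep_log_subset hy0).trans hy
    have hEr : Ep (y % ω ^ log ω y) ⊆ S := (Ep_mod_subset hy0).trans hy
    have hdec := subst_decomp hfE hy0 hy
    have hT : subst f (y % ω ^ log ω y) < ω ^ subst f (log ω y) :=
      subst_lt_opow hS hfE hf hEr hEa (mod_lt _ (opow_ne_zero _ omega0_ne_zero))
    have hc1 : (1 : Ordinal) ≤ y / ω ^ log ω y :=
      Order.one_le_iff_pos.2 ((Ordinal.div_pos (opow_ne_zero _ omega0_ne_zero)).2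
        (opow_log_le_self ω hy0))
    have hcw : y / ω ^ log ω y < ω := div_opow_log_lt y one_lt_omega0
    have h1 : ω ^ subst f (log ω y) ≤ ω ^ ξ :=
      calc ω ^ subst f (log ω y) = ω ^ subst f (log ω y) * 1 := (mul_one _).symm
        _ ≤ ω ^ subst f (log ω y) * (y / ω ^ log ω y) := mul_le_mul_right hc1 _
        _ ≤ ω ^ subst f (log ω y) * (y / ω ^ log ω y) + subst f (y % ω ^ log ω y) :=
            le_self_add
        _ = subst f y := hdec.symm
        _ = ω ^ ξ := hξ'
    have hAxi : subst f (log ω y) ≤ ξ := (opow_le_opow_iff_right one_lt_omega0).1 h1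
    have h2 : ω ^ ξ < ω ^ (subst f (log ω y) + 1) :=
      calc ω ^ ξ = subst f y := hξ'.symm
        _ = ω ^ subst f (log ω y) * (y / ω ^ log ω y) + subst f (y % ω ^ log ω y) := hdec
        _ < ω ^ subst f (log ω y) * (y / ω ^ log ω y) + ω ^ subst f (log ω y) :=
            add_lt_add_right hT _
        _ = ω ^ subst f (log ω y) * (y / ω ^ log ω y + 1) := by rw [mul_add, mul_one]
        _ ≤ ω ^ subst f (log ω y) * ω := mul_le_mul_right (Order.add_one_le_of_lt hcw) _
        _ = ω ^ (subst f (log ω y) + 1) := by rw [opow_add, opow_one]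
    have hxiA : ξ ≤ subst f (log ω y) :=
      Order.lt_add_one_iff.1 ((opow_lt_opow_iff_right one_lt_omega0).1 h2)
    have hz_eq : subst f y = ω ^ subst f (log ω y) := by
      rw [hξ', le_antisymm hxiA hAxi]
    have hmul_le : ω ^ subst f (log ω y) * (y / ω ^ log ω y) ≤ ω ^ subst f (log ω y) * 1 := by
      rw [mul_one]
      calc ω ^ subst f (log ω y) * (y / ω ^ log ω y)
          ≤ ω ^ subst f (log ω y) * (y / ω ^ log ω y) + subst f (y % ω ^ log ω y) :=
            le_self_add
        _ = subst f y := hdec.symm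
        _ = ω ^ subst f (log ω y) := hz_eq
    have hc : y / ω ^ log ω y = 1 := by
      by_contra hne1
      have hlt : (1 : Ordinal) < y / ω ^ log ω y := lt_of_le_of_ne hc1 (Ne.symm hne1)
      have := (mul_lt_mul_iff_right₀ (opow_pos (subst f (log ω y)) omega0_pos)).2 hlt
      exact absurd hmul_le (not_le.2 this)
    have hT0 : subst f (y % ω ^ log ω y) = 0 := by
      have h3 : ω ^ subst f (log ω y) + subst f (y % ω ^ log ω y)
          = ω ^ subst f (log ω y) + 0 := by
        rw [add_zero]
        conv_rhs => rw [← hz_eq]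
        rw [hdec, hc, mul_one]
      exact add_left_cancel_iff.1 h3
    have hrem0 : y % ω ^ log ω y = 0 := by
      by_contra hne
      exact (subst_pos hfE hne hEr).ne' hT0
    have hyeq : y = ω ^ log ω y := by
      have h4 := Ordinal.div_add_mod y (ω ^ log ω y)
      rw [hrem0, add_zero, hc, mul_one] at h4
      exact h4.symm
    rw [hyeq]
    exact ⟨opow_pos _ omega0_pos, principal_add_omega0_opow _⟩
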